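/- Let n be an odd prime and let A = (a_{i,j}) be the n×n matrix over Z_{3n²} defined by a_{i,j} = (−1)^{i+j}·(3n(j−1) + 3(i−1) + 1) for 1 ≤ j ≤ (n+1)/2 and a_{i,j} = (−1)^{i+j}·(3nj − 3i + 1) for (n+3)/2 ≤ j ≤ n. Then for every j ∈ [1,n] the sum of the entries of column j has additive order 3n² in Z_{3n²} (i.e. it is a unit of Z/3n²Z), and for every i ∈ [1,n] the sum of the entries of row i has additive order 3n² or 3n in Z_{3n²}. (This is the key computational claim underlying the paper's biembedding of K_{3×n²} whose faces have length 3n² or 3n³.) -/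
import Mathlib


lemma altOdd (k : ℕ) (a b : ℤ) :
    ∑ i ∈ Finset.Icc 1 (2*k+1), (-1:ℤ)^i * (a*i + b) = -(a*(k+1) + b) := by
  induction k with
  | zero => simp
  | succ k ih =>
    have h2 : 2*(k+1)+1 = (2*k+1+1)+1 := by ring
    have e1 : ((-1:ℤ))^(2*k+1+1) = 1 := by
      have h3 : 2*k+1+1 = 2*(k+1) := by ring
      rw [h3, pow_mul]; norm_num
    have e2 : ((-1:ℤ))^(2*k+1+1+1) = -1 := by rw [pow_succ, e1, one_mul]
    rw [h2, Finset.sum_Icc_succ_top (by omega), Finset.sum_Icc_succ_top (by omega), ih, e1, e2]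
    push_cast
    ring

lemma altEven (t : ℕ) (a b : ℤ) :
    ∑ i ∈ Finset.Icc 1 (2*t), (-1:ℤ)^i * (a*i + b) = a*t := by
  induction t with
  | zero => simp
  | succ t ih =>
    have h2 : 2*(t+1) = (2*t+1)+1 := by ring
    have e0 : ((-1:ℤ))^(2*t) = 1 := by rw [pow_mul]; norm_num
    have e1 : ((-1:ℤ))^(2*t+1) = -1 := by rw [pow_succ, e0, one_mul]
    have e2 : ((-1:ℤ))^(2*t+1+1) = 1 := by rw [pow_succ, e1]; norm_num
    rw [h2, Finset.sum_Icc_succ_top (by omega), Finset.sum_Icc_succ_top (by omega), ih, e1, e2]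
    push_cast
    ring

lemma dvd_neg_one_pow (d c : ℤ) (s : ℕ) : d ∣ (-1)^s * c ↔ d ∣ c := by
  rcases Nat.even_or_odd s with h | h
  · rw [h.neg_one_pow, one_mul]
  · rw [h.neg_one_pow, neg_one_mul, dvd_neg]

lemma ordKey (N : ℕ) [NeZero N] (c : ℤ) (m : ℕ) :
    m • ((c : ZMod N)) = 0 ↔ (N:ℤ) ∣ m * c := by
  rw [nsmul_eq_mul,
    show ((m : ZMod N) * (c : ZMod N)) = (((m * c : ℤ) : ZMod N)) by push_cast; ring,
    ZMod.intCast_zmod_eq_zero_iff_dvd]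

lemma ordEq (N : ℕ) [NeZero N] (c : ℤ) (h : IsCoprime ((N:ℕ):ℤ) c) :
    addOrderOf ((c : ZMod N)) = N := by
  have h1 : addOrderOf ((c : ZMod N)) ∣ N := by
    apply addOrderOf_dvd_of_nsmul_eq_zero
    rw [ordKey]
    exact Dvd.intro c rfl
  have h2 : (N:ℤ) ∣ ((addOrderOf ((c : ZMod N)) : ℕ) : ℤ) := by
    have hz := (ordKey N c (addOrderOf ((c : ZMod N)))).mp (addOrderOf_nsmul_eq_zero _)
    exact h.dvd_of_dvd_mul_right hz
  exact Nat.dvd_antisymm h1 (Int.ofNat_dvd.mp h2)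

lemma copN (n : ℕ) (hp : n.Prime) (c : ℤ) (h3 : ¬(3:ℤ) ∣ c) (hn : ¬(n:ℤ) ∣ c) :
    IsCoprime (((3*n^2 : ℕ)):ℤ) c := by
  have p3 : Prime (3:ℤ) := Nat.prime_iff_prime_int.mp (by norm_num)
  have pn : Prime ((n:ℤ)) := Nat.prime_iff_prime_int.mp hp
  have c3 : IsCoprime (3:ℤ) c := (p3.coprime_iff_not_dvd).mpr h3
  have cn : IsCoprime ((n:ℤ)) c := (pn.coprime_iff_not_dvd).mpr hn
  have : (((3*n^2 : ℕ)):ℤ) = 3 * ((n:ℤ) * (n:ℤ)) := by push_cast; ring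
  rw [this]
  exact c3.mul_left (cn.mul_left cn)

lemma colOrder (n : ℕ) (hp : n.Prime) (c : ℤ) (h3 : ¬(3:ℤ) ∣ c) (hn : ¬(n:ℤ) ∣ c) :
    addOrderOf ((c : ZMod (3*n^2))) = 3*n^2 := by
  haveI : NeZero (3*n^2) := ⟨by have := hp.two_le; positivity⟩
  exact ordEq _ c (copN n hp c h3 hn)

lemma rowOrder (n : ℕ) (hp : n.Prime) (c : ℤ) (h3 : ¬(3:ℤ) ∣ c)
    (hn2 : ¬((n:ℤ) * n ∣ c)) :
    addOrderOf ((c : ZMod (3*n^2))) = 3*n^2 ∨ addOrderOf ((c : ZMod (3*n^2))) = 3*n := by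
  have hnpos := hp.two_le
  haveI : NeZero (3*n^2) := ⟨by positivity⟩
  by_cases hn : (n:ℤ) ∣ c
  · right
    obtain ⟨c', hc'⟩ := hn
    have hnc' : ¬ (n:ℤ) ∣ c' := fun ⟨c'', h⟩ => hn2 ⟨c'', by rw [hc', h]; ring⟩
    have hne3 : n ≠ 3 := fun h => h3 (by rw [hc', h]; exact Dvd.dvd.mul_right ⟨1, by norm_num⟩ c')
    set d := addOrderOf ((c : ZMod (3*n^2))) with hd
    have hdvd : ((3*n^2 : ℕ):ℤ) ∣ (d:ℤ) * c :=
      (ordKey _ c d).mp (addOrderOf_nsmul_eq_zero _)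
    have hdvd' : (3 * (n:ℤ) * n) ∣ (d:ℤ) * c := by
      have : ((3*n^2 : ℕ):ℤ) = 3 * (n:ℤ) * n := by push_cast; ring
      rwa [this] at hdvd
    have p3 : Prime (3:ℤ) := Nat.prime_iff_prime_int.mp (by norm_num)
    have pn : Prime ((n:ℤ)) := Nat.prime_iff_prime_int.mp hp
    have h3d : (3:ℤ) ∣ (d:ℤ) := by
      rcases (p3.dvd_mul).mp (dvd_trans ⟨(n:ℤ)*n, by ring⟩ hdvd') with h | h
      · exact h
      · exact absurd h h3
    have hnd : (n:ℤ) ∣ (d:ℤ) := by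
      have h1 : (n:ℤ) * n ∣ (d:ℤ) * ((n:ℤ) * c') := by
        rw [← hc']; exact dvd_trans ⟨3, by ring⟩ hdvd'
      have h2 : (n:ℤ) ∣ (d:ℤ) * c' := by
        rcases h1 with ⟨e, he⟩
        exact ⟨e, by apply mul_left_cancel₀ (show (n:ℤ) ≠ 0 by positivity); linarith [he]⟩
      rcases (pn.dvd_mul).mp h2 with h | h
      · exact h
      · exact absurd h hnc'
    have h3dn : 3 ∣ d := Int.ofNat_dvd.mp h3d
    have hndn : n ∣ d := Int.ofNat_dvd.mp hnd
    have hcop : Nat.Coprime 3 n := (Nat.coprime_primes (by norm_num) hp).mpr (fun h => hne3 h.symm)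
    have h3n : 3 * n ∣ d := hcop.mul_dvd_of_dvd_of_dvd h3dn hndn
    have hdle : d ∣ 3 * n := by
      apply addOrderOf_dvd_of_nsmul_eq_zero
      rw [ordKey]
      refine ⟨c', ?_⟩
      push_cast
      rw [hc']; ring
    exact Nat.dvd_antisymm hdle h3n
  · left
    exact colOrder n hp c h3 hn

lemma rowAsmEven (t : ℕ) (a b1 b2 : ℤ) :
    ((∑ j ∈ Finset.Icc 1 (2*t+1), (-1:ℤ)^j * (a*(j:ℤ) + b1))
      + ∑ j ∈ Finset.Icc (2*t+2) (2*(2*t)+1), (-1:ℤ)^j * (a*(j:ℤ) + b2))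
    = -(a*((t:ℤ)+1) + b1) - a*(t:ℤ) := by
  have hfull := altOdd (2*t) a b2
  have hpart := altOdd t a b2
  have hS1 := altOdd t a b1
  have hconsec : (∑ j ∈ Finset.Icc 1 (2*t+1), (-1:ℤ)^j * (a*(j:ℤ) + b2))
      + (∑ j ∈ Finset.Icc (2*t+2) (2*(2*t)+1), (-1:ℤ)^j * (a*(j:ℤ) + b2))
      = ∑ j ∈ Finset.Icc 1 (2*(2*t)+1), (-1:ℤ)^j * (a*(j:ℤ) + b2) := by
    rw [show Finset.Icc 1 (2*t+1) = Finset.Ioc 0 (2*t+1) from Finset.Icc_add_one_left_eq_Ioc 0 _,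
        show Finset.Icc (2*t+2) (2*(2*t)+1) = Finset.Ioc (2*t+1) (2*(2*t)+1) from
          Finset.Icc_add_one_left_eq_Ioc _ _,
        show Finset.Icc 1 (2*(2*t)+1) = Finset.Ioc 0 (2*(2*t)+1) from Finset.Icc_add_one_left_eq_Ioc 0 _]
    exact Finset.sum_Ioc_consecutive _ (by omega) (by omega)
  push_cast at hfull
  linear_combination hS1 + hconsec + hfull - hpart

lemma rowAsmOdd (t : ℕ) (a b1 b2 : ℤ) :
    ((∑ j ∈ Finset.Icc 1 (2*t+1+1), (-1:ℤ)^j * (a*(j:ℤ) + b1))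
      + ∑ j ∈ Finset.Icc (2*t+1+2) (2*(2*t+1)+1), (-1:ℤ)^j * (a*(j:ℤ) + b2))
    = -(a*(2*(t:ℤ)+2) + b2) := by
  have hfull := altOdd (2*t+1) a b2
  have hpart := altEven (t+1) a b2
  have hS1 := altEven (t+1) a b1
  rw [show 2*(t+1) = 2*t+1+1 from by ring] at hpart hS1
  have hconsec : (∑ j ∈ Finset.Icc 1 (2*t+1+1), (-1:ℤ)^j * (a*(j:ℤ) + b2))
      + (∑ j ∈ Finset.Icc (2*t+1+2) (2*(2*t+1)+1), (-1:ℤ)^j * (a*(j:ℤ) + b2))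
      = ∑ j ∈ Finset.Icc 1 (2*(2*t+1)+1), (-1:ℤ)^j * (a*(j:ℤ) + b2) := by
    rw [show Finset.Icc 1 (2*t+1+1) = Finset.Ioc 0 (2*t+1+1) from Finset.Icc_add_one_left_eq_Ioc 0 _,
        show Finset.Icc (2*t+1+2) (2*(2*t+1)+1) = Finset.Ioc (2*t+1+1) (2*(2*t+1)+1) from
          Finset.Icc_add_one_left_eq_Ioc _ _,
        show Finset.Icc 1 (2*(2*t+1)+1) = Finset.Ioc 0 (2*(2*t+1)+1) from Finset.Icc_add_one_left_eq_Ioc 0 _]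
    exact Finset.sum_Ioc_consecutive _ (by omega) (by omega)
  push_cast at hfull hpart hS1
  linear_combination hS1 + hconsec + hfull - hpart
theorem stmt17 (n : ℕ) (hp : n.Prime) (hodd : Odd n)
    (A : ℕ → ℕ → ZMod (3 * n ^ 2))
    (hA : ∀ i ∈ Finset.Icc 1 n, ∀ j ∈ Finset.Icc 1 n,
      (j ≤ (n + 1) / 2 →
        A i j = (((-1) ^ (i + j) * (3 * (n : ℤ) * ((j : ℤ) - 1) + 3 * ((i : ℤ) - 1) + 1) : ℤ)
          : ZMod (3 * n ^ 2))) ∧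
      ((n + 3) / 2 ≤ j →
        A i j = (((-1) ^ (i + j) * (3 * (n : ℤ) * j - 3 * (i : ℤ) + 1) : ℤ)
          : ZMod (3 * n ^ 2)))) :
    (∀ j ∈ Finset.Icc 1 n,
      addOrderOf (∑ i ∈ Finset.Icc 1 n, A i j) = 3 * n ^ 2) ∧
    (∀ i ∈ Finset.Icc 1 n,
      addOrderOf (∑ j ∈ Finset.Icc 1 n, A i j) = 3 * n ^ 2 ∨
      addOrderOf (∑ j ∈ Finset.Icc 1 n, A i j) = 3 * n) := by
  obtain ⟨k, hk⟩ := hodd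
  have hk' : n = 2*k+1 := by omega
  clear hk
  subst hk'
  have hk1 : 1 ≤ k := by have := hp.two_le; omega
  constructor
  · -- columns
    intro j hj
    have hjm := Finset.mem_Icc.mp hj
    rcases le_or_gt j (k+1) with hc | hc
    · -- left block
      have hcast : (∑ i ∈ Finset.Icc 1 (2*k+1), A i j)
          = ((∑ i ∈ Finset.Icc 1 (2*k+1),
              (-1:ℤ)^j * ((-1:ℤ)^i * (3*(i:ℤ) + (3*(2*(k:ℤ)+1)*((j:ℤ)-1) - 2))) : ℤ)
            : ZMod (3*(2*k+1)^2)) := by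
        rw [Int.cast_sum]
        refine Finset.sum_congr rfl fun i hi => ?_
        rw [(hA i hi j hj).1 (by omega)]
        congr 1
        push_cast
        ring
      have hval : (∑ i ∈ Finset.Icc 1 (2*k+1),
              (-1:ℤ)^j * ((-1:ℤ)^i * (3*(i:ℤ) + (3*(2*(k:ℤ)+1)*((j:ℤ)-1) - 2))))
          = (-1:ℤ)^(j+1) * (3*(2*(k:ℤ)+1)*((j:ℤ)-1) + 3*(k:ℤ) + 1) := by
        rw [← Finset.mul_sum, altOdd k 3 (3*(2*(k:ℤ)+1)*((j:ℤ)-1) - 2)]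
        ring
      rw [hcast, hval]
      refine colOrder (2*k+1) hp _ ?_ ?_
      · intro h
        rw [dvd_neg_one_pow] at h
        obtain ⟨c, hc3⟩ := h
        have h12 : (3:ℤ) ∣ 1 := ⟨c - (2*(k:ℤ)+1)*((j:ℤ)-1) - (k:ℤ), by linear_combination hc3⟩
        norm_num at h12
      · intro h
        rw [dvd_neg_one_pow] at h
        have h12 : ((2*k+1:ℕ):ℤ) ∣ 1 := by
          rw [show (1:ℤ) = ((2*k+1:ℕ):ℤ)*(6*((j:ℤ)-1)+3)
              - 2*(3*(2*(k:ℤ)+1)*((j:ℤ)-1) + 3*(k:ℤ) + 1) from by push_cast; ring]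
          exact dvd_sub (dvd_mul_right _ _) (h.mul_left 2)
        have hle := Int.le_of_dvd one_pos h12
        push_cast at hle
        omega
    · -- right block
      have hcast : (∑ i ∈ Finset.Icc 1 (2*k+1), A i j)
          = ((∑ i ∈ Finset.Icc 1 (2*k+1),
              (-1:ℤ)^j * ((-1:ℤ)^i * ((-3)*(i:ℤ) + (3*(2*(k:ℤ)+1)*(j:ℤ) + 1))) : ℤ)
            : ZMod (3*(2*k+1)^2)) := by
        rw [Int.cast_sum]
        refine Finset.sum_congr rfl fun i hi => ?_
        rw [(hA i hi j hj).2 (by omega)]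
        congr 1
        push_cast
        ring
      have hval : (∑ i ∈ Finset.Icc 1 (2*k+1),
              (-1:ℤ)^j * ((-1:ℤ)^i * ((-3)*(i:ℤ) + (3*(2*(k:ℤ)+1)*(j:ℤ) + 1))))
          = (-1:ℤ)^(j+1) * (3*(2*(k:ℤ)+1)*(j:ℤ) - (3*(k:ℤ) + 2)) := by
        rw [← Finset.mul_sum, altOdd k (-3) (3*(2*(k:ℤ)+1)*(j:ℤ) + 1)]
        ring
      rw [hcast, hval]
      refine colOrder (2*k+1) hp _ ?_ ?_
      · intro h
        rw [dvd_neg_one_pow] at h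
        obtain ⟨c, hc3⟩ := h
        have h12 : (3:ℤ) ∣ 2 := ⟨(2*(k:ℤ)+1)*(j:ℤ) - (k:ℤ) - c, by linear_combination -hc3⟩
        norm_num at h12
      · intro h
        rw [dvd_neg_one_pow] at h
        have h12 : ((2*k+1:ℕ):ℤ) ∣ 1 := by
          rw [show (1:ℤ) = ((2*k+1:ℕ):ℤ)*(6*(j:ℤ)-3)
              - 2*(3*(2*(k:ℤ)+1)*(j:ℤ) - (3*(k:ℤ) + 2)) from by push_cast; ring]
          exact dvd_sub (dvd_mul_right _ _) (h.mul_left 2)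
        have hle := Int.le_of_dvd one_pos h12
        push_cast at hle
        omega
  · -- rows
    intro i hi
    have him := Finset.mem_Icc.mp hi
    have hsplit : (∑ j ∈ Finset.Icc 1 (2*k+1), A i j)
        = (∑ j ∈ Finset.Icc 1 (k+1), A i j) + ∑ j ∈ Finset.Icc (k+2) (2*k+1), A i j := by
      rw [show Finset.Icc 1 (2*k+1) = Finset.Ioc 0 (2*k+1) from Finset.Icc_add_one_left_eq_Ioc 0 _,
          show Finset.Icc 1 (k+1) = Finset.Ioc 0 (k+1) from Finset.Icc_add_one_left_eq_Ioc 0 _,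
          show Finset.Icc (k+2) (2*k+1) = Finset.Ioc (k+1) (2*k+1) from Finset.Icc_add_one_left_eq_Ioc _ _]
      exact (Finset.sum_Ioc_consecutive _ (by omega) (by omega)).symm
    rcases Nat.even_or_odd k with ⟨t, ht⟩ | ⟨t, ht⟩
    · -- k = 2t even, n = 4t+1
      obtain rfl : k = 2*t := by omega
      have ht1 : 1 ≤ t := by omega
      have hc1 : (∑ j ∈ Finset.Icc 1 (2*t+1), A i j)
          = ((∑ j ∈ Finset.Icc 1 (2*t+1),
              (-1:ℤ)^i * ((-1:ℤ)^j * ((3*(4*(t:ℤ)+1))*(j:ℤ)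
                + (3*(i:ℤ) - 3*(4*(t:ℤ)+1) - 2))) : ℤ) : ZMod (3*(2*(2*t)+1)^2)) := by
        rw [Int.cast_sum]
        refine Finset.sum_congr rfl fun j hj => ?_
        have hjm := Finset.mem_Icc.mp hj
        rw [(hA i hi j (Finset.mem_Icc.mpr ⟨by omega, by omega⟩)).1 (by omega)]
        congr 1
        push_cast
        ring
      have hc2 : (∑ j ∈ Finset.Icc (2*t+2) (2*(2*t)+1), A i j)
          = ((∑ j ∈ Finset.Icc (2*t+2) (2*(2*t)+1),
              (-1:ℤ)^i * ((-1:ℤ)^j * ((3*(4*(t:ℤ)+1))*(j:ℤ)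
                + (1 - 3*(i:ℤ)))) : ℤ) : ZMod (3*(2*(2*t)+1)^2)) := by
        rw [Int.cast_sum]
        refine Finset.sum_congr rfl fun j hj => ?_
        have hjm := Finset.mem_Icc.mp hj
        rw [(hA i hi j (Finset.mem_Icc.mpr ⟨by omega, by omega⟩)).2 (by omega)]
        congr 1
        push_cast
        ring
      rw [hsplit, hc1, hc2, ← Int.cast_add, ← Finset.mul_sum, ← Finset.mul_sum, ← mul_add,
        rowAsmEven t (3*(4*(t:ℤ)+1)) (3*(i:ℤ) - 3*(4*(t:ℤ)+1) - 2) (1 - 3*(i:ℤ)),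
        show ((-1:ℤ)^i * (-((3*(4*(t:ℤ)+1))*((t:ℤ)+1) + (3*(i:ℤ) - 3*(4*(t:ℤ)+1) - 2))
            - (3*(4*(t:ℤ)+1))*(t:ℤ)))
          = (-1:ℤ)^(i+1) * (3*(4*(t:ℤ)+1)*(2*(t:ℤ)) + 3*(i:ℤ) - 2) from by rw [pow_succ]; ring]
      refine rowOrder (2*(2*t)+1) hp _ ?_ ?_
      · intro h
        rw [dvd_neg_one_pow] at h
        obtain ⟨c, hc3⟩ := h
        have h12 : (3:ℤ) ∣ 2 := ⟨(4*(t:ℤ)+1)*(2*(t:ℤ)) + (i:ℤ) - c, by linear_combination -hc3⟩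
        norm_num at h12
      · intro h
        rw [dvd_neg_one_pow] at h
        rw [show ((2*(2*t)+1:ℕ):ℤ) = 4*(t:ℤ)+1 from by push_cast; ring] at h
        have hd1 : (4*(t:ℤ)+1) ∣ (3*(4*(t:ℤ)+1)*(2*(t:ℤ)) + 3*(i:ℤ) - 2) :=
          dvd_trans (dvd_mul_right _ _) h
        have hd2 : (4*(t:ℤ)+1) ∣ (3*(i:ℤ) - 2) := by
          rw [show (3*(i:ℤ)-2) = (3*(4*(t:ℤ)+1)*(2*(t:ℤ)) + 3*(i:ℤ) - 2)
              - (4*(t:ℤ)+1)*(6*(t:ℤ)) from by ring]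
          exact dvd_sub hd1 (dvd_mul_right _ _)
        obtain ⟨q, hq⟩ := hd2
        have hi1 : (1:ℤ) ≤ (i:ℤ) := by omega
        have hi2 : (i:ℤ) ≤ 4*(t:ℤ)+1 := by omega
        have htz : (1:ℤ) ≤ (t:ℤ) := by omega
        have hq1 : 1 ≤ q := by nlinarith
        have hq2 : q ≤ 2 := by nlinarith
        have hfact : (3*(4*(t:ℤ)+1)*(2*(t:ℤ)) + 3*(i:ℤ) - 2)
            = (4*(t:ℤ)+1) * (6*(t:ℤ) + q) := by linear_combination hq
        rw [hfact] at h
        have hd3 : (4*(t:ℤ)+1) ∣ (6*(t:ℤ) + q) :=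
          (mul_dvd_mul_iff_left (show (4*(t:ℤ)+1) ≠ 0 by positivity)).mp h
        have hd4 : (4*(t:ℤ)+1) ∣ (2*q - 3) := by
          rw [show (2*q-3:ℤ) = 2*(6*(t:ℤ)+q) - 3*(4*(t:ℤ)+1) from by ring]
          exact dvd_sub (hd3.mul_left 2) (dvd_mul_left _ _)
        have habs : (2*q - 3 = 1) ∨ (2*q - 3 = -1) := by omega
        have hone : (4*(t:ℤ)+1) ∣ 1 := by
          rcases habs with h' | h'
          · rwa [h'] at hd4
          · rw [h'] at hd4; exact dvd_neg.mp hd4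
        have hle := Int.le_of_dvd one_pos hone
        omega
    · -- k = 2t+1 odd, n = 4t+3
      obtain rfl : k = 2*t+1 := by omega
      have hc1 : (∑ j ∈ Finset.Icc 1 (2*t+1+1), A i j)
          = ((∑ j ∈ Finset.Icc 1 (2*t+1+1),
              (-1:ℤ)^i * ((-1:ℤ)^j * ((3*(4*(t:ℤ)+3))*(j:ℤ)
                + (3*(i:ℤ) - 3*(4*(t:ℤ)+3) - 2))) : ℤ) : ZMod (3*(2*(2*t+1)+1)^2)) := by
        rw [Int.cast_sum]
        refine Finset.sum_congr rfl fun j hj => ?_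
        have hjm := Finset.mem_Icc.mp hj
        rw [(hA i hi j (Finset.mem_Icc.mpr ⟨by omega, by omega⟩)).1 (by omega)]
        congr 1
        push_cast
        ring
      have hc2 : (∑ j ∈ Finset.Icc (2*t+1+2) (2*(2*t+1)+1), A i j)
          = ((∑ j ∈ Finset.Icc (2*t+1+2) (2*(2*t+1)+1),
              (-1:ℤ)^i * ((-1:ℤ)^j * ((3*(4*(t:ℤ)+3))*(j:ℤ)
                + (1 - 3*(i:ℤ)))) : ℤ) : ZMod (3*(2*(2*t+1)+1)^2)) := by
        rw [Int.cast_sum]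
        refine Finset.sum_congr rfl fun j hj => ?_
        have hjm := Finset.mem_Icc.mp hj
        rw [(hA i hi j (Finset.mem_Icc.mpr ⟨by omega, by omega⟩)).2 (by omega)]
        congr 1
        push_cast
        ring
      rw [hsplit, hc1, hc2, ← Int.cast_add, ← Finset.mul_sum, ← Finset.mul_sum, ← mul_add,
        rowAsmOdd t (3*(4*(t:ℤ)+3)) (3*(i:ℤ) - 3*(4*(t:ℤ)+3) - 2) (1 - 3*(i:ℤ)),
        show ((-1:ℤ)^i * (-((3*(4*(t:ℤ)+3))*(2*(t:ℤ)+2) + (1 - 3*(i:ℤ)))))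
          = (-1:ℤ)^(i+1) * (3*(4*(t:ℤ)+3)*(2*(t:ℤ)+2) + 1 - 3*(i:ℤ)) from by rw [pow_succ]; ring]
      refine rowOrder (2*(2*t+1)+1) hp _ ?_ ?_
      · intro h
        rw [dvd_neg_one_pow] at h
        obtain ⟨c, hc3⟩ := h
        have h12 : (3:ℤ) ∣ 19 :=
          ⟨c + (i:ℤ) - 8*(t:ℤ)^2 - 14*(t:ℤ), by linear_combination hc3⟩
        norm_num at h12
      · intro h
        rw [dvd_neg_one_pow] at h
        rw [show ((2*(2*t+1)+1:ℕ):ℤ) = 4*(t:ℤ)+3 from by push_cast; ring] at h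
        have hd1 : (4*(t:ℤ)+3) ∣ (3*(4*(t:ℤ)+3)*(2*(t:ℤ)+2) + 1 - 3*(i:ℤ)) :=
          dvd_trans (dvd_mul_right _ _) h
        have hd2 : (4*(t:ℤ)+3) ∣ (3*(i:ℤ) - 1) := by
          rw [show (3*(i:ℤ)-1) = (4*(t:ℤ)+3)*(6*(t:ℤ)+6)
              - (3*(4*(t:ℤ)+3)*(2*(t:ℤ)+2) + 1 - 3*(i:ℤ)) from by ring]
          exact dvd_sub (dvd_mul_right _ _) hd1
        obtain ⟨q, hq⟩ := hd2
        have hi1 : (1:ℤ) ≤ (i:ℤ) := by omega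
        have hi2 : (i:ℤ) ≤ 4*(t:ℤ)+3 := by omega
        have htz : (0:ℤ) ≤ (t:ℤ) := by omega
        have hq1 : 1 ≤ q := by nlinarith
        have hq2 : q ≤ 2 := by nlinarith
        have hfact : (3*(4*(t:ℤ)+3)*(2*(t:ℤ)+2) + 1 - 3*(i:ℤ))
            = (4*(t:ℤ)+3) * (6*(t:ℤ) + 6 - q) := by linear_combination -hq
        rw [hfact] at h
        have hd3 : (4*(t:ℤ)+3) ∣ (6*(t:ℤ) + 6 - q) :=
          (mul_dvd_mul_iff_left (show (4*(t:ℤ)+3) ≠ 0 by positivity)).mp h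
        have hd4 : (4*(t:ℤ)+3) ∣ (3 - 2*q) := by
          rw [show (3-2*q:ℤ) = 2*(6*(t:ℤ)+6-q) - 3*(4*(t:ℤ)+3) from by ring]
          exact dvd_sub (hd3.mul_left 2) (dvd_mul_left _ _)
        have habs : (3 - 2*q = 1) ∨ (3 - 2*q = -1) := by omega
        have hone : (4*(t:ℤ)+3) ∣ 1 := by
          rcases habs with h' | h'
          · rwa [h'] at hd4
          · rw [h'] at hd4; exact dvd_neg.mp hd4
        have hle := Int.le_of_dvd one_pos hone
        omega
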